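/- arXiv:2502.02766 — 2 statements merged into one kernel-verified Lean document; each statement's English description precedes it below -/
import Mathlib

section
/- If f(x) is the CDF of the normal distribution N(0, σ²), then for all real x, the second derivative of log(f(x)) satisfies 0 ≥ (log f(x))'' ≥ -1/σ². -/
open Real Set

noncomputable def stdNormalPDF (t : ℝ) : ℝ := (Real.sqrt (2 * Real.pi))⁻¹ * Real.exp (-t ^ 2 / 2)

noncomputable def stdNormalCDF (x : ℝ) : ℝ := ∫ t in Set.Iic x, stdNormalPDF t

open Filter MeasureTheory Topology

lemma pdf_pos (t : ℝ) : 0 < stdNormalPDF t := by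
  unfold stdNormalPDF; positivity

lemma pdf_cont : Continuous stdNormalPDF := by
  unfold stdNormalPDF; fun_prop

lemma pdf_integrable : Integrable stdNormalPDF := by
  have h := (integrable_exp_neg_mul_sq (b := (2:ℝ)⁻¹) (by norm_num)).const_mul
    ((Real.sqrt (2 * Real.pi))⁻¹)
  refine h.congr (Filter.Eventually.of_forall fun x => ?_)
  unfold stdNormalPDF; ring_nf

lemma hasDerivAt_pdf (t : ℝ) : HasDerivAt stdNormalPDF (-t * stdNormalPDF t) t := by
  have h : HasDerivAt (fun t : ℝ => -t ^ 2 / 2) (-t) t := by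
    have := ((hasDerivAt_pow 2 t).neg).div_const 2
    refine this.congr_deriv ?_; push_cast; ring
  have := (h.exp).const_mul ((Real.sqrt (2 * Real.pi))⁻¹)
  unfold stdNormalPDF
  refine this.congr_deriv ?_; ring

lemma cdf_eq (a x : ℝ) : stdNormalCDF x = stdNormalCDF a + ∫ t in a..x, stdNormalPDF t := by
  unfold stdNormalCDF
  have h := intervalIntegral.integral_Iic_sub_Iic (f := stdNormalPDF) (a := a) (b := x)
    (μ := volume) pdf_integrable.integrableOn pdf_integrable.integrableOn
  linarith

lemma hasDerivAt_cdf (x : ℝ) : HasDerivAt stdNormalCDF (stdNormalPDF x) x := by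
  have h : HasDerivAt (fun y => stdNormalCDF 0 + ∫ t in (0:ℝ)..y, stdNormalPDF t)
      (stdNormalPDF x) x := by
    refine HasDerivAt.const_add _ ?_
    exact intervalIntegral.integral_hasDerivAt_right
      ((pdf_integrable.intervalIntegrable (a := 0) (b := x)))
      (pdf_cont.stronglyMeasurableAtFilter _ _) pdf_cont.continuousAt
  exact h.congr_of_eventuallyEq (Filter.Eventually.of_forall fun y => cdf_eq 0 y)

lemma cdf_nonneg (x : ℝ) : 0 ≤ stdNormalCDF x :=
  setIntegral_nonneg measurableSet_Iic fun t _ => (pdf_pos t).le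

lemma cdf_pos (x : ℝ) : 0 < stdNormalCDF x := by
  have h := cdf_eq (x - 1) x
  have hpos : 0 < ∫ t in (x-1)..x, stdNormalPDF t := by
    apply intervalIntegral.intervalIntegral_pos_of_pos
    · exact pdf_integrable.intervalIntegrable
    · exact fun t => pdf_pos t
    · linarith
  have := cdf_nonneg (x - 1)
  linarith [h]

lemma pdf_le_exp {u : ℝ} (hu : u ≤ -2) :
    stdNormalPDF u ≤ (Real.sqrt (2 * Real.pi))⁻¹ * Real.exp u := by
  unfold stdNormalPDF
  have h : -u ^ 2 / 2 ≤ u := by nlinarith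
  have := Real.exp_le_exp.2 h
  have hc : (0:ℝ) < (Real.sqrt (2 * Real.pi))⁻¹ := by positivity
  nlinarith [Real.exp_pos u, Real.exp_pos (-u^2/2)]

lemma cdf_le_exp {u : ℝ} (hu : u ≤ -2) :
    stdNormalCDF u ≤ (Real.sqrt (2 * Real.pi))⁻¹ * Real.exp u := by
  unfold stdNormalCDF
  have h1 : ∫ t in Set.Iic u, stdNormalPDF t
      ≤ ∫ t in Set.Iic u, (Real.sqrt (2 * Real.pi))⁻¹ * Real.exp t := by
    refine setIntegral_mono_on pdf_integrable.integrableOn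
      (((integrableOn_exp_Iic u).const_mul _)) measurableSet_Iic ?_
    intro t ht
    exact pdf_le_exp (le_trans ht hu)
  have h2 : ∫ t in Set.Iic u, (Real.sqrt (2 * Real.pi))⁻¹ * Real.exp t
      = (Real.sqrt (2 * Real.pi))⁻¹ * Real.exp u := by
    rw [MeasureTheory.integral_const_mul, integral_exp_Iic]
  linarith

lemma decay (k : ℕ) : Tendsto (fun u : ℝ => |u| ^ k * Real.exp u) atBot (𝓝 0) := by
  have h1 : Tendsto (fun v : ℝ => v ^ k * Real.exp (-v)) atTop (𝓝 0) :=
    tendsto_pow_mul_exp_neg_atTop_nhds_zero k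
  have h2 : Tendsto (fun u : ℝ => -u) atBot atTop := tendsto_neg_atBot_atTop
  have h3 := h1.comp h2
  refine h3.congr' ?_
  filter_upwards [eventually_le_atBot (0:ℝ)] with u hu
  simp only [Function.comp]
  rw [abs_of_nonpos hu, neg_neg]

lemma tendsto_pow_mul (k : ℕ) (g : ℝ → ℝ)
    (hb : ∀ u ≤ (-2:ℝ), |g u| ≤ (Real.sqrt (2 * Real.pi))⁻¹ * Real.exp u) :
    Tendsto (fun u => u ^ k * g u) atBot (𝓝 0) := by
  have hlim : Tendsto (fun u : ℝ => (Real.sqrt (2 * Real.pi))⁻¹ * (|u| ^ k * Real.exp u))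
      atBot (𝓝 0) := by simpa using (decay k).const_mul ((Real.sqrt (2 * Real.pi))⁻¹)
  refine squeeze_zero_norm' ?_ hlim
  filter_upwards [eventually_le_atBot (-2:ℝ)] with u hu
  have := hb u hu
  have h0 : (0:ℝ) ≤ |u| ^ k := by positivity
  calc ‖u ^ k * g u‖ = |u| ^ k * |g u| := by rw [norm_mul]; simp [abs_pow]
    _ ≤ |u| ^ k * ((Real.sqrt (2 * Real.pi))⁻¹ * Real.exp u) := by
        exact mul_le_mul_of_nonneg_left this h0
    _ = (Real.sqrt (2 * Real.pi))⁻¹ * (|u| ^ k * Real.exp u) := by ring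

lemma tend_pdf (k : ℕ) : Tendsto (fun u => u ^ k * stdNormalPDF u) atBot (𝓝 0) :=
  tendsto_pow_mul k _ fun u hu => by
    rw [abs_of_pos (pdf_pos u)]; exact pdf_le_exp hu

lemma tend_cdf (k : ℕ) : Tendsto (fun u => u ^ k * stdNormalCDF u) atBot (𝓝 0) :=
  tendsto_pow_mul k _ fun u hu => by
    rw [abs_of_nonneg (cdf_nonneg u)]; exact cdf_le_exp hu

lemma nonneg_of (F F' : ℝ → ℝ) (hd : ∀ u, HasDerivAt F (F' u) u) (h0 : ∀ u, 0 ≤ F' u)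
    (hlim : Tendsto F atBot (𝓝 0)) (x : ℝ) : 0 ≤ F x := by
  have mono : Monotone F := by
    refine monotone_of_deriv_nonneg (fun u => (hd u).differentiableAt) fun u => ?_
    rw [(hd u).deriv]; exact h0 u
  exact le_of_tendsto hlim (eventually_atBot.2 ⟨x, fun y hy => mono hy⟩)

lemma K_nonneg (u : ℝ) : 0 ≤ stdNormalPDF u + u * stdNormalCDF u := by
  refine nonneg_of (fun v => stdNormalPDF v + v * stdNormalCDF v) (fun v => stdNormalCDF v) (fun v => ?_) (fun v => cdf_nonneg v) ?_ u
  · have h := (hasDerivAt_pdf v).add ((hasDerivAt_id v).mul (hasDerivAt_cdf v))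
    refine h.congr_deriv ?_; simp only [id_eq]; ring
  · have l1 : Tendsto stdNormalPDF atBot (𝓝 0) := by simpa using tend_pdf 0
    have l2 : Tendsto (fun v => v * stdNormalCDF v) atBot (𝓝 0) := by simpa using tend_cdf 1
    simpa using l1.add l2

lemma H_nonneg (u : ℝ) :
    0 ≤ (1 + u ^ 2) * stdNormalCDF u + u * stdNormalPDF u := by
  refine nonneg_of (fun v => (1 + v ^ 2) * stdNormalCDF v + v * stdNormalPDF v)
    (fun v => 2 * (stdNormalPDF v + v * stdNormalCDF v)) (fun v => ?_)
    (fun v => mul_nonneg two_pos.le (K_nonneg v)) ?_ u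
  · have h := (((hasDerivAt_const v (1:ℝ)).add (hasDerivAt_pow 2 v)).mul (hasDerivAt_cdf v)).add
      ((hasDerivAt_id v).mul (hasDerivAt_pdf v))
    refine h.congr_deriv ?_; simp only [id_eq, Pi.add_apply, Pi.mul_apply]; push_cast; ring
  · have l1 : Tendsto stdNormalCDF atBot (𝓝 0) := by simpa using tend_cdf 0
    have l2 : Tendsto (fun v => v ^ 2 * stdNormalCDF v) atBot (𝓝 0) := tend_cdf 2
    have l3 : Tendsto (fun v => v * stdNormalPDF v) atBot (𝓝 0) := by simpa using tend_pdf 1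
    have := (l1.add l2).add l3
    norm_num at this
    exact this.congr fun v => by ring

lemma G_nonneg (u : ℝ) :
    0 ≤ stdNormalCDF u ^ 2 - u * stdNormalPDF u * stdNormalCDF u - stdNormalPDF u ^ 2 := by
  refine nonneg_of
    (fun v => stdNormalCDF v ^ 2 - v * stdNormalPDF v * stdNormalCDF v - stdNormalPDF v ^ 2)
    (fun v => stdNormalPDF v * ((1 + v ^ 2) * stdNormalCDF v + v * stdNormalPDF v)) (fun v => ?_)
    (fun v => mul_nonneg (pdf_pos v).le (H_nonneg v)) ?_ u
  · have h := (((hasDerivAt_cdf v).pow 2).sub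
      (((hasDerivAt_id v).mul (hasDerivAt_pdf v)).mul (hasDerivAt_cdf v))).sub
      ((hasDerivAt_pdf v).pow 2)
    refine h.congr_deriv ?_; simp only [id_eq, Pi.add_apply, Pi.mul_apply]; push_cast; ring
  · have l1 : Tendsto stdNormalCDF atBot (𝓝 0) := by simpa using tend_cdf 0
    have l2 : Tendsto stdNormalPDF atBot (𝓝 0) := by simpa using tend_pdf 0
    have l3 : Tendsto (fun v => v * stdNormalPDF v) atBot (𝓝 0) := by simpa using tend_pdf 1
    have := ((l1.mul l1).sub ((l3.mul l1))).sub (l2.mul l2)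
    norm_num at this
    exact this.congr fun v => by ring

/-- If `f` is the CDF of `N(0, σ²)`, then `0 ≥ (log f)″ ≥ -1/σ²` everywhere. -/
theorem stmt0 (σ : ℝ) (hσ : 0 < σ) (f : ℝ → ℝ) (hf : ∀ x, f x = stdNormalCDF (x / σ)) (x : ℝ) :
    deriv (deriv (fun y => Real.log (f y))) x ≤ 0 ∧
    -1 / σ ^ 2 ≤ deriv (deriv (fun y => Real.log (f y))) x := by
  have hfe : f = fun y => stdNormalCDF (y / σ) := funext hf
  subst hfe
  have hσ0 : σ ≠ 0 := ne_of_gt hσ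
  set g : ℝ → ℝ := fun y => stdNormalPDF (y / σ) / (σ * stdNormalCDF (y / σ)) with hg_def
  have hinner : ∀ y : ℝ, HasDerivAt (fun y : ℝ => y / σ) (1 / σ) y := fun y => by
    simpa using (hasDerivAt_id y).div_const σ
  have hcomp : ∀ y : ℝ, HasDerivAt (fun y => stdNormalCDF (y / σ))
      (stdNormalPDF (y / σ) * (1 / σ)) y := fun y =>
    (hasDerivAt_cdf (y / σ)).comp (h₂ := stdNormalCDF) y (hinner y)
  have hlog : ∀ y : ℝ, HasDerivAt (fun y => Real.log (stdNormalCDF (y / σ))) (g y) y := by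
    intro y
    have h := (Real.hasDerivAt_log (ne_of_gt (cdf_pos (y / σ)))).comp y (hcomp y)
    refine h.congr_deriv ?_
    simp only [hg_def]
    field_simp
  have hd1 : deriv (fun y => Real.log (stdNormalCDF (y / σ))) = g :=
    funext fun y => (hlog y).deriv
  rw [hd1]
  set u := x / σ with hu
  set P := stdNormalPDF u with hP
  set C := stdNormalCDF u with hC
  have hPpos := pdf_pos u
  have hCpos := cdf_pos u
  have hnum : HasDerivAt (fun y => stdNormalPDF (y / σ)) (-u * P * (1 / σ)) x :=
    (hasDerivAt_pdf u).comp (h₂ := stdNormalPDF) x (hinner x)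
  have hden : HasDerivAt (fun y => σ * stdNormalCDF (y / σ)) (σ * (P * (1 / σ))) x :=
    (hcomp x).const_mul σ
  have hne : σ * C ≠ 0 := by positivity
  have hg := hnum.div hden hne
  have hE : deriv g x = (-(u * P * C) - P ^ 2) / (σ ^ 2 * C ^ 2) := by
    rw [HasDerivAt.deriv (f := g) hg]
    field_simp
    ring
  rw [hE]
  have hK := K_nonneg u
  have hG := G_nonneg u
  constructor
  · apply div_nonpos_of_nonpos_of_nonneg
    · nlinarith
    · positivity
  · rw [div_le_div_iff₀ (by positivity) (by positivity)]
    nlinarith [sq_nonneg σ, sq_nonneg C]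
end

section
/- Let f be a differentiable function taking values in (0,1), and let M, M' ∈ ℝ^{d₁×d₂} satisfy ‖M‖_∞ ≤ α and ‖M'‖_∞ ≤ α (entrywise). Define β_α = sup_{|x|≤α} f(x)(1-f(x))/f'(x)², assumed finite with f' > 0 on [-α,α]. Then the averaged squared Hellinger distance satisfies d_H²(f(M), f(M')) ≥ (1/(8β_α))·‖M - M'‖_F²/(d₁d₂). -/
open Real Finset

lemma theta_hasDerivAt (f : ℝ → ℝ) (hf : Differentiable ℝ f)
    (hrange : ∀ x, f x ∈ Set.Ioo (0 : ℝ) 1) (t : ℝ) :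
    HasDerivAt (fun s => Real.arcsin (Real.sqrt (f s)))
      (deriv f t / (2 * Real.sqrt (f t) * Real.sqrt (1 - f t))) t := by
  have h0 : 0 < f t := (hrange t).1
  have h1 : f t < 1 := (hrange t).2
  have hs0 : 0 < Real.sqrt (f t) := Real.sqrt_pos.2 h0
  have hs1 : Real.sqrt (f t) < 1 := by
    rw [show (1:ℝ) = Real.sqrt 1 by simp]
    exact Real.sqrt_lt_sqrt h0.le h1
  have hne1 : Real.sqrt (f t) ≠ -1 := by linarith [Real.sqrt_nonneg (f t)]
  have hne2 : Real.sqrt (f t) ≠ 1 := ne_of_lt hs1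
  have hd1 : HasDerivAt f (deriv f t) t := (hf t).hasDerivAt
  have hd2 : HasDerivAt (fun s => Real.sqrt (f s))
      (1 / (2 * Real.sqrt (f t)) * deriv f t) t :=
    (Real.hasDerivAt_sqrt h0.ne').comp t hd1
  have hd3 := (Real.hasDerivAt_arcsin hne1 hne2).comp t hd2
  refine hd3.congr_deriv (Eq.symm ?_)
  rw [Real.sq_sqrt h0.le]
  have h1f : 0 < Real.sqrt (1 - f t) := Real.sqrt_pos.2 (by linarith)
  rw [div_eq_iff (by positivity : (2 * Real.sqrt (f t) * Real.sqrt (1 - f t)) ≠ 0)]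
  field_simp

set_option maxHeartbeats 1000000 in
lemma key_lt (α : ℝ) (f : ℝ → ℝ) (hf : Differentiable ℝ f)
    (hrange : ∀ x, f x ∈ Set.Ioo (0 : ℝ) 1)
    (hf' : ∀ x ∈ Set.Icc (-α) α, 0 < deriv f x)
    (βα : ℝ) (hβpos : 0 < βα)
    (hβ : ∀ x ∈ Set.Icc (-α) α, f x * (1 - f x) / (deriv f x) ^ 2 ≤ βα)
    (x y : ℝ) (hyx : y < x) (hx : |x| ≤ α) (hy : |y| ≤ α) :
    (x - y) ^ 2 / (8 * βα) ≤
      (Real.sqrt (f x) - Real.sqrt (f y)) ^ 2 +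
        (Real.sqrt (1 - f x) - Real.sqrt (1 - f y)) ^ 2 := by
  set θ : ℝ → ℝ := fun s => Real.arcsin (Real.sqrt (f s)) with hθdef
  set θ' : ℝ → ℝ := fun t => deriv f t / (2 * Real.sqrt (f t) * Real.sqrt (1 - f t)) with hθ'def
  have hder : ∀ t, HasDerivAt θ (θ' t) t := fun t => theta_hasDerivAt f hf hrange t
  obtain ⟨c, hc, hcs⟩ := exists_hasDerivAt_eq_slope θ θ' hyx
    (fun t _ => (hder t).continuousAt.continuousWithinAt) (fun t _ => hder t)
  have hcIcc : c ∈ Set.Icc (-α) α := by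
    rw [abs_le] at hx hy
    exact ⟨by linarith [hc.1], by linarith [hc.2]⟩
  have h0c : 0 < f c := (hrange c).1
  have h1c : f c < 1 := (hrange c).2
  have hfc' : 0 < deriv f c := hf' c hcIcc
  have hsqβ : 0 < Real.sqrt βα := Real.sqrt_pos.2 hβpos
  have hxy : (0:ℝ) < x - y := by linarith
  -- lower bound on θ' c
  have hθ'lb : 1 / (2 * Real.sqrt βα) ≤ θ' c := by
    have h1 : f c * (1 - f c) ≤ βα * (deriv f c) ^ 2 := by
      have := hβ c hcIcc
      rw [div_le_iff₀ (by positivity)] at this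
      linarith
    have h2 : Real.sqrt (f c) * Real.sqrt (1 - f c) ≤ Real.sqrt βα * deriv f c := by
      rw [← Real.sqrt_mul h0c.le]
      calc Real.sqrt (f c * (1 - f c)) ≤ Real.sqrt (βα * (deriv f c) ^ 2) :=
            Real.sqrt_le_sqrt h1
        _ = Real.sqrt βα * deriv f c := by
            rw [Real.sqrt_mul hβpos.le, Real.sqrt_sq hfc'.le]
    have hsfc : 0 < Real.sqrt (f c) := Real.sqrt_pos.2 h0c
    have hsfc1 : 0 < Real.sqrt (1 - f c) := Real.sqrt_pos.2 (by linarith)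
    have hden : 0 < 2 * Real.sqrt (f c) * Real.sqrt (1 - f c) := by positivity
    rw [hθ'def]
    rw [div_le_div_iff₀ (by linarith : (0:ℝ) < 2 * Real.sqrt βα) hden]
    nlinarith
  -- Δ and its bounds
  set Δ : ℝ := θ x - θ y with hΔdef
  have hΔeq : Δ = θ' c * (x - y) := by
    rw [hcs, div_mul_cancel₀ _ (by linarith : x - y ≠ 0)]
  have hΔlb : (x - y) / (2 * Real.sqrt βα) ≤ Δ := by
    calc (x - y) / (2 * Real.sqrt βα) = (x - y) * (1 / (2 * Real.sqrt βα)) := by ring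
      _ ≤ (x - y) * θ' c := mul_le_mul_of_nonneg_left hθ'lb hxy.le
      _ = Δ := by rw [hΔeq]; ring
  have hΔnn : 0 ≤ Δ := le_trans (div_nonneg hxy.le (by linarith)) hΔlb
  -- θ in (0, π/2)
  have hθmem : ∀ t, θ t ∈ Set.Ioo 0 (π / 2) := by
    intro t
    have h0 : 0 < f t := (hrange t).1
    have h1 : f t < 1 := (hrange t).2
    have hs1 : Real.sqrt (f t) < 1 := by
      rw [show (1:ℝ) = Real.sqrt 1 by simp]
      exact Real.sqrt_lt_sqrt h0.le h1
    exact ⟨Real.arcsin_pos.2 (Real.sqrt_pos.2 h0), Real.arcsin_lt_pi_div_two.2 hs1⟩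
  have hΔub : Δ ≤ π / 2 := by
    have h1 := (hθmem x).2
    have h2 := (hθmem y).1
    rw [hΔdef]; linarith
  -- entry = 2 - 2 cos Δ
  have hsin : ∀ t, Real.sin (θ t) = Real.sqrt (f t) := fun t =>
    Real.sin_arcsin (by linarith [Real.sqrt_nonneg (f t)]) (by
      rw [show (1:ℝ) = Real.sqrt 1 by simp]
      exact Real.sqrt_le_sqrt (hrange t).2.le)
  have hcos : ∀ t, Real.cos (θ t) = Real.sqrt (1 - f t) := fun t => by
    rw [hθdef]
    simp only []
    rw [Real.cos_arcsin, Real.sq_sqrt (hrange t).1.le]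
  have hentry : (Real.sqrt (f x) - Real.sqrt (f y)) ^ 2 +
      (Real.sqrt (1 - f x) - Real.sqrt (1 - f y)) ^ 2 = 2 - 2 * Real.cos Δ := by
    rw [← hsin x, ← hsin y, ← hcos x, ← hcos y, hΔdef, Real.cos_sub]
    have p1 := Real.sin_sq_add_cos_sq (θ x)
    have p2 := Real.sin_sq_add_cos_sq (θ y)
    nlinarith [p1, p2]
  -- 2 - 2 cos Δ = 4 sin (Δ/2)^2
  have hhalf : 2 - 2 * Real.cos Δ = 4 * Real.sin (Δ / 2) ^ 2 := by
    have hc2 : Real.cos Δ = 2 * Real.cos (Δ / 2) ^ 2 - 1 := by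
      rw [show Δ = 2 * (Δ / 2) from by ring, Real.cos_two_mul]
      ring_nf
    have h2 := Real.sin_sq_add_cos_sq (Δ / 2)
    linarith
  -- concavity bound : sin (Δ/2) ≥ (√2/π) Δ
  have hπ := Real.pi_pos
  have hsinlb : Real.sqrt 2 * Δ / π ≤ Real.sin (Δ / 2) := by
    have hb1 : (0:ℝ) ≤ 4 / π * (Δ / 2) := by positivity
    have hb2 : 4 / π * (Δ / 2) ≤ 1 := by
      rw [div_mul_eq_mul_div, div_le_one hπ]; linarith
    have hcon := strictConcaveOn_sin_Icc.concaveOn.2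
      (Set.mem_Icc.2 ⟨le_rfl, hπ.le⟩)
      (Set.mem_Icc.2 ⟨by positivity, by linarith⟩ : π / 4 ∈ Set.Icc (0:ℝ) π)
      (by linarith : (0:ℝ) ≤ 1 - 4 / π * (Δ / 2))
      hb1 (by ring)
    simp only [smul_eq_mul, mul_zero, Real.sin_zero, zero_add] at hcon
    have harg : 4 / π * (Δ / 2) * (π / 4) = Δ / 2 := by
      field_simp
    rw [harg, Real.sin_pi_div_four] at hcon
    calc Real.sqrt 2 * Δ / π = 4 / π * (Δ / 2) * (Real.sqrt 2 / 2) := by ring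
      _ ≤ Real.sin (Δ / 2) := hcon
  -- combine
  have hsinnn : 0 ≤ Real.sqrt 2 * Δ / π := by positivity
  have hsq : (Real.sqrt 2 * Δ / π) ^ 2 ≤ Real.sin (Δ / 2) ^ 2 :=
    pow_le_pow_left₀ hsinnn hsinlb 2
  have h2eq : (Real.sqrt 2 * Δ / π) ^ 2 = 2 * Δ ^ 2 / π ^ 2 := by
    rw [div_pow, mul_pow, Real.sq_sqrt (by norm_num : (0:ℝ) ≤ 2)]
  have hΔsq : (x - y) ^ 2 / (4 * βα) ≤ Δ ^ 2 := by
    have h := pow_le_pow_left₀ (div_nonneg hxy.le (by linarith)) hΔlb 2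
    calc (x - y) ^ 2 / (4 * βα) = ((x - y) / (2 * Real.sqrt βα)) ^ 2 := by
          rw [div_pow, mul_pow, Real.sq_sqrt hβpos.le]; norm_num
      _ ≤ Δ ^ 2 := h
  have hπ16 : π ^ 2 ≤ 16 := by nlinarith [Real.pi_le_four]
  have hA : 2 * Δ ^ 2 / 16 ≤ 2 * Δ ^ 2 / π ^ 2 := by
    rw [div_le_div_iff₀ (by norm_num) (by positivity)]
    nlinarith [sq_nonneg Δ]
  rw [hentry, hhalf]
  calc (x - y) ^ 2 / (8 * βα) = ((x - y) ^ 2 / (4 * βα)) / 2 := by ring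
    _ ≤ Δ ^ 2 / 2 := by linarith [hΔsq]
    _ = 4 * (2 * Δ ^ 2 / 16) := by ring
    _ ≤ 4 * (2 * Δ ^ 2 / π ^ 2) := by linarith [hA]
    _ ≤ 4 * Real.sin (Δ / 2) ^ 2 := by
        have h3 : 2 * Δ ^ 2 / π ^ 2 ≤ Real.sin (Δ / 2) ^ 2 := h2eq ▸ hsq
        linarith [h3]

lemma key_all (α : ℝ) (f : ℝ → ℝ) (hf : Differentiable ℝ f)
    (hrange : ∀ x, f x ∈ Set.Ioo (0 : ℝ) 1)
    (hf' : ∀ x ∈ Set.Icc (-α) α, 0 < deriv f x)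
    (βα : ℝ) (hβpos : 0 < βα)
    (hβ : ∀ x ∈ Set.Icc (-α) α, f x * (1 - f x) / (deriv f x) ^ 2 ≤ βα)
    (x y : ℝ) (hx : |x| ≤ α) (hy : |y| ≤ α) :
    (x - y) ^ 2 / (8 * βα) ≤
      (Real.sqrt (f x) - Real.sqrt (f y)) ^ 2 +
        (Real.sqrt (1 - f x) - Real.sqrt (1 - f y)) ^ 2 := by
  rcases lt_trichotomy y x with h | h | h
  · exact key_lt α f hf hrange hf' βα hβpos hβ x y h hx hy
  · subst h; simp
  · have := key_lt α f hf hrange hf' βα hβpos hβ y x h hy hx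
    have e1 : (y - x) ^ 2 = (x - y) ^ 2 := by ring
    have e2 : (Real.sqrt (f y) - Real.sqrt (f x)) ^ 2
        = (Real.sqrt (f x) - Real.sqrt (f y)) ^ 2 := by ring
    have e3 : (Real.sqrt (1 - f y) - Real.sqrt (1 - f x)) ^ 2
        = (Real.sqrt (1 - f x) - Real.sqrt (1 - f y)) ^ 2 := by ring
    rw [e1, e2, e3] at this
    exact this

/-- Hellinger-to-Frobenius bound: for a differentiable `f` with values in `(0,1)` and matrices
`M, M'` with entries bounded by `α`, the averaged squared Hellinger distance between `f(M)`
and `f(M')` is at least `(1/(8 β_α)) ‖M - M'‖_F²/(d₁d₂)`. -/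
theorem stmt9 (d₁ d₂ : ℕ) (hd₁ : 0 < d₁) (hd₂ : 0 < d₂) (α : ℝ) (hα : 0 < α)
    (f : ℝ → ℝ) (hf : Differentiable ℝ f) (hrange : ∀ x, f x ∈ Set.Ioo (0 : ℝ) 1)
    (hf' : ∀ x ∈ Set.Icc (-α) α, 0 < deriv f x)
    (βα : ℝ) (hβpos : 0 < βα)
    (hβ : ∀ x ∈ Set.Icc (-α) α, f x * (1 - f x) / (deriv f x) ^ 2 ≤ βα)
    (M M' : Matrix (Fin d₁) (Fin d₂) ℝ)
    (hM : ∀ i j, |M i j| ≤ α) (hM' : ∀ i j, |M' i j| ≤ α) :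
    (1 / (d₁ * d₂ : ℝ)) * ∑ i : Fin d₁, ∑ j : Fin d₂,
        ((Real.sqrt (f (M i j)) - Real.sqrt (f (M' i j))) ^ 2 +
          (Real.sqrt (1 - f (M i j)) - Real.sqrt (1 - f (M' i j))) ^ 2) ≥
      (1 / (8 * βα)) * (∑ i : Fin d₁, ∑ j : Fin d₂, (M i j - M' i j) ^ 2) / (d₁ * d₂ : ℝ) := by
  have hD : (0:ℝ) < (d₁ * d₂ : ℝ) := by
    have h1 : (0:ℝ) < (d₁ : ℝ) := Nat.cast_pos.2 hd₁
    have h2 : (0:ℝ) < (d₂ : ℝ) := Nat.cast_pos.2 hd₂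
    positivity
  have hsum : ∑ i : Fin d₁, ∑ j : Fin d₂, (M i j - M' i j) ^ 2 / (8 * βα) ≤
      ∑ i : Fin d₁, ∑ j : Fin d₂,
        ((Real.sqrt (f (M i j)) - Real.sqrt (f (M' i j))) ^ 2 +
          (Real.sqrt (1 - f (M i j)) - Real.sqrt (1 - f (M' i j))) ^ 2) := by
    refine Finset.sum_le_sum fun i _ => Finset.sum_le_sum fun j _ => ?_
    exact key_all α f hf hrange hf' βα hβpos hβ (M i j) (M' i j) (hM i j) (hM' i j)
  rw [ge_iff_le]
  have hre : (1 / (8 * βα)) * (∑ i : Fin d₁, ∑ j : Fin d₂, (M i j - M' i j) ^ 2) / (d₁ * d₂ : ℝ)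
      = (1 / (d₁ * d₂ : ℝ)) *
        ∑ i : Fin d₁, ∑ j : Fin d₂, (M i j - M' i j) ^ 2 / (8 * βα) := by
    have e : ∑ i : Fin d₁, ∑ j : Fin d₂, (M i j - M' i j) ^ 2 / (8 * βα)
        = (∑ i : Fin d₁, ∑ j : Fin d₂, (M i j - M' i j) ^ 2) / (8 * βα) := by
      rw [Finset.sum_div]
      exact Finset.sum_congr rfl fun i _ => by rw [Finset.sum_div]
    rw [e]
    ring
  rw [hre]
  exact mul_le_mul_of_nonneg_left hsum (by positivity)
end
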